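/- Let C = [C_1,…,C_r] be the W-characteristic set of ⟨P⟩. Then ⟨C_1,…,C_r⟩ ⊆ ⟨P⟩ ⊆ sat(C). -/

import Mathlib

open MvPolynomial

namespace CharSets

variable {n : ℕ} {K : Type*} [Field K]

/-- The coefficient of `x_i ^ d` in `F`, as a polynomial in the remaining variables. -/
noncomputable def coefv (i : Fin n) (d : ℕ) (F : MvPolynomial (Fin n) K) :
    MvPolynomial (Fin n) K :=
  ∑ m ∈ F.support.filter (fun m => m i = d), monomial (Finsupp.erase i m) (F.coeff m)

/-- The leading coefficient of `F` with respect to the variable `x_i`. -/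
noncomputable def lcv (i : Fin n) (F : MvPolynomial (Fin n) K) : MvPolynomial (Fin n) K :=
  coefv i (F.degreeOf i) F

/-- Auxiliary pseudo-division: computes (pseudo-quotient, pseudo-remainder) pairs,
with the first argument as fuel; the total power of the leading coefficient used is
exactly the fuel, so that starting with fuel `max(l - m + 1, 0)` yields the pair
`(Q, R)` of the unique representation `lc(F,x_i)^q • G = Q*F + R` with
`q = max(l - m + 1, 0)` and `deg(R, x_i) < deg(F, x_i)`. -/
noncomputable def pdivAux (i : Fin n) (F : MvPolynomial (Fin n) K) :
    ℕ → MvPolynomial (Fin n) K × MvPolynomial (Fin n) K →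
      MvPolynomial (Fin n) K × MvPolynomial (Fin n) K
  | 0, QR => QR
  | q + 1, QR =>
    if (QR.2).degreeOf i < F.degreeOf i then
      (lcv i F ^ (q + 1) * QR.1, lcv i F ^ (q + 1) * QR.2)
    else
      pdivAux i F q
        (lcv i F * QR.1 +
            coefv i ((QR.2).degreeOf i) QR.2 * X i ^ ((QR.2).degreeOf i - F.degreeOf i),
          lcv i F * QR.2 -
            coefv i ((QR.2).degreeOf i) QR.2 * X i ^ ((QR.2).degreeOf i - F.degreeOf i) * F)

/-- The pseudo-remainder `prem(G, F, x_i)`. -/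
noncomputable def prem (G F : MvPolynomial (Fin n) K) (i : Fin n) : MvPolynomial (Fin n) K :=
  (pdivAux i F (G.degreeOf i + 1 - F.degreeOf i) (0, G)).2

/-- The pseudo-quotient `pquo(G, F, x_i)`. -/
noncomputable def pquo (G F : MvPolynomial (Fin n) K) (i : Fin n) : MvPolynomial (Fin n) K :=
  (pdivAux i F (G.degreeOf i + 1 - F.degreeOf i) (0, G)).1

/-- The class of `P`: the largest index (1-based) of a variable actually occurring in `P`;
the class of a constant is `0`. -/
noncomputable def cls (P : MvPolynomial (Fin n) K) : ℕ :=
  P.vars.sup fun i => (i : ℕ) + 1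

/-- The degree of `G` in the leading variable of `P` (`0` if `P` is constant). -/
noncomputable def degLv (G P : MvPolynomial (Fin n) K) : ℕ :=
  if h : P.vars.Nonempty then G.degreeOf (P.vars.max' h) else 0

/-- `G` is R-reduced with respect to `P`, i.e. `deg(G, lv(P)) < deg(P, lv(P))`. -/
def RReduced (G P : MvPolynomial (Fin n) K) : Prop :=
  degLv G P < degLv P P

/-- The initial of `P`: its leading coefficient w.r.t. its leading variable. -/
noncomputable def ini (P : MvPolynomial (Fin n) K) : MvPolynomial (Fin n) K :=
  if h : P.vars.Nonempty then lcv (P.vars.max' h) P else P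

/-- Pseudo-remainder of `G` w.r.t. `F` in the leading variable of `F`
(in case `F` is constant, `m = 0` and the pseudo-remainder is `0`). -/
noncomputable def premLv (G F : MvPolynomial (Fin n) K) : MvPolynomial (Fin n) K :=
  if h : F.vars.Nonempty then prem G F (F.vars.max' h) else 0

/-- Pseudo-quotient of `G` w.r.t. `F` in the leading variable of `F`. -/
noncomputable def pquoLv (G F : MvPolynomial (Fin n) K) : MvPolynomial (Fin n) K :=
  if h : F.vars.Nonempty then pquo G F (F.vars.max' h) else 0

/-- Iterated pseudo-remainder with respect to a triangular set `[T_1, …, T_r]`: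
`prem(P, T) = prem(⋯prem(P, T_r, lv(T_r)), …, T_1, lv(T_1))`. -/
noncomputable def premTS (P : MvPolynomial (Fin n) K) (L : List (MvPolynomial (Fin n) K)) :
    MvPolynomial (Fin n) K :=
  L.foldr (fun T acc => premLv acc T) P

/-- The Sylvester matrix of `F` and `G` with respect to the variable `x_i`. -/
noncomputable def sylvester (i : Fin n) (F G : MvPolynomial (Fin n) K) :
    Matrix (Fin (G.degreeOf i + F.degreeOf i)) (Fin (G.degreeOf i + F.degreeOf i))
      (MvPolynomial (Fin n) K) :=
  Matrix.of fun r c =>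
    if (r : ℕ) < G.degreeOf i then
      if (r : ℕ) ≤ (c : ℕ) ∧ (c : ℕ) ≤ (r : ℕ) + F.degreeOf i then
        coefv i (F.degreeOf i + (r : ℕ) - (c : ℕ)) F
      else 0
    else
      if (r : ℕ) - G.degreeOf i ≤ (c : ℕ) ∧ (c : ℕ) ≤ (r : ℕ) then
        coefv i (G.degreeOf i + ((r : ℕ) - G.degreeOf i) - (c : ℕ)) G
      else 0

/-- The resultant `res(F, G, x_i)` of `F` and `G` w.r.t. `x_i`
(the determinant of the Sylvester matrix). -/
noncomputable def resv (F G : MvPolynomial (Fin n) K) (i : Fin n) : MvPolynomial (Fin n) K :=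
  (sylvester i F G).det

/-- Resultant of `F` and `G` w.r.t. the leading variable of `G`. -/
noncomputable def resLv (F G : MvPolynomial (Fin n) K) : MvPolynomial (Fin n) K :=
  if h : G.vars.Nonempty then resv F G (G.vars.max' h) else F

/-- Iterated resultant with respect to a triangular set:
`res(F, T) = res(⋯res(F, T_r, lv(T_r)), …, T_1, lv(T_1))`. -/
noncomputable def resTS (F : MvPolynomial (Fin n) K) (L : List (MvPolynomial (Fin n) K)) :
    MvPolynomial (Fin n) K :=
  L.foldr (fun T acc => resLv acc T) F

/-- A triangular set: a nonempty ordered set of nonconstant polynomials with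
strictly increasing classes. -/
def TriangularSet (L : List (MvPolynomial (Fin n) K)) : Prop :=
  L ≠ [] ∧ (∀ T ∈ L, 0 < cls T) ∧ L.Chain' fun A B => cls A < cls B

/-- An ascending set: either a single nonzero constant, or a triangular set in which
every later element is R-reduced with respect to every earlier one. -/
def AscendingSet (L : List (MvPolynomial (Fin n) K)) : Prop :=
  (∃ a : K, a ≠ 0 ∧ L = [MvPolynomial.C a]) ∨
    (TriangularSet L ∧ L.Pairwise fun A B => RReduced B A)

/-- `F` has lower rank than `G`. -/
def rkLT (F G : MvPolynomial (Fin n) K) : Prop :=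
  cls F < cls G ∨ (cls F = cls G ∧ 0 < cls F ∧ degLv F F < degLv G G)

/-- `F` and `G` have the same rank: neither has lower rank than the other. -/
def rkEQ (F G : MvPolynomial (Fin n) K) : Prop :=
  ¬ rkLT F G ∧ ¬ rkLT G F

/-- `B` has lower rank than `A` (as ascending sets). -/
def ascLT (B A : List (MvPolynomial (Fin n) K)) : Prop :=
  (∃ j, j < min A.length B.length ∧
      (∀ i, i < j → rkEQ (A.getD i 0) (B.getD i 0)) ∧ rkLT (B.getD j 0) (A.getD j 0)) ∨
    (A.length < B.length ∧ ∀ i, i < A.length → rkEQ (A.getD i 0) (B.getD i 0))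

/-- A Ritt characteristic set of the ideal `I`: an ascending set contained in `I`
of minimal rank among all ascending sets contained in `I`. -/
def RittCharSet (I : Ideal (MvPolynomial (Fin n) K)) (A : List (MvPolynomial (Fin n) K)) :
    Prop :=
  AscendingSet A ∧ (∀ a ∈ A, a ∈ I) ∧
    ∀ B : List (MvPolynomial (Fin n) K), AscendingSet B → (∀ b ∈ B, b ∈ I) → ¬ ascLT B A

/-- The saturated ideal of a triangular set, as a set of polynomials. -/
def satTS (L : List (MvPolynomial (Fin n) K)) : Set (MvPolynomial (Fin n) K) :=
  {F | ∃ q : ℕ, 0 < q ∧ (L.map ini).prod ^ q * F ∈ Ideal.span {T | T ∈ L}}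

/-- A regular set: a triangular set such that `res(ini(T_j), [T_1, …, T_{j-1}]) ≠ 0`
for `j = 2, …, r`. -/
def RegularSet (L : List (MvPolynomial (Fin n) K)) : Prop :=
  TriangularSet L ∧
    ∀ j : ℕ, 0 < j → j < L.length → resTS (ini (L.getD j 0)) (L.take j) ≠ 0

/-- A normal triangular set: `deg(ini(T_j), lv(T_i)) = 0` for all `i < j`. -/
def NormalSet (L : List (MvPolynomial (Fin n) K)) : Prop :=
  TriangularSet L ∧ L.Pairwise fun A B => degLv (ini B) A = 0

/-- The purely lexicographical order on monomials determined by `x_1 < ⋯ < x_n`. -/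
def plexLT (a b : Fin n →₀ ℕ) : Prop :=
  ∃ k : Fin n, a k < b k ∧ ∀ j : Fin n, k < j → a j = b j

/-- `m` is the leading monomial of `P` w.r.t. the plex order. -/
def IsLpp (P : MvPolynomial (Fin n) K) (m : Fin n →₀ ℕ) : Prop :=
  m ∈ P.support ∧ ∀ m' ∈ P.support, m' ≠ m → plexLT m' m

/-- `G` is the reduced (Buchberger–)Gröbner basis of the ideal `I` w.r.t. the plex
term order determined by `x_1 < ⋯ < x_n`: its elements are nonzero monic members of `I`,
the leading monomial of every nonzero member of `I` is divisible by the leading monomial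
of some element of `G`, every element of `G` is B-reduced w.r.t. the others, and `G`
generates `I`. -/
def IsReducedGB (I : Ideal (MvPolynomial (Fin n) K)) (G : Finset (MvPolynomial (Fin n) K)) :
    Prop :=
  (∀ g ∈ G, g ∈ I ∧ g ≠ 0 ∧ ∀ m, IsLpp g m → g.coeff m = 1) ∧
    (∀ F ∈ I, F ≠ 0 → ∃ g ∈ G, ∃ mg mF, IsLpp g mg ∧ IsLpp F mF ∧ mg ≤ mF) ∧
    (∀ g ∈ G, ∀ g' ∈ G, g' ≠ g → ∀ m ∈ g.support, ∀ m', IsLpp g' m' → ¬ m' ≤ m) ∧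
    Ideal.span (G : Set (MvPolynomial (Fin n) K)) = I

/-- `Cs` is the W-characteristic set of `I`: the minimal triangular set contained in the
reduced plex Gröbner basis `G` of `I`, i.e. for each class realized in `G`, `Cs` contains
the element of that class whose leading monomial is minimal w.r.t. the plex order, the
elements being ordered by increasing class (equivalently, by the plex order). -/
def IsWCharSet (I : Ideal (MvPolynomial (Fin n) K)) (Cs : List (MvPolynomial (Fin n) K)) :
    Prop :=
  ∃ G : Finset (MvPolynomial (Fin n) K), IsReducedGB I G ∧
    (Cs.Chain' fun A B => cls A < cls B) ∧
    (∀ c ∈ Cs, c ∈ G) ∧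
    (∀ g ∈ G, ∃ c ∈ Cs, cls c = cls g) ∧
    ∀ c ∈ Cs, ∀ g ∈ G, cls g = cls c → g ≠ c →
      ∃ mc mg, IsLpp c mc ∧ IsLpp g mg ∧ plexLT mc mg

/-- The set of common zeros of a set `S` of polynomials over `k`, taken in `Kc ^ n`
for an extension `Kc` of `k`. -/
def zeroSet {k : Type*} [Field k] (Kc : Type*) [CommRing Kc] [Algebra k Kc]
    (S : Set (MvPolynomial (Fin n) k)) : Set (Fin n → Kc) :=
  {a | ∀ p ∈ S, MvPolynomial.aeval a p = 0}


section Aux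
variable {n : ℕ} {K : Type*} [Field K]

theorem coeff_coefv (i : Fin n) (d : ℕ) (F : MvPolynomial (Fin n) K) (μ : Fin n →₀ ℕ) :
    (coefv i d F).coeff μ = if μ i = 0 then F.coeff (μ + Finsupp.single i d) else 0 := by
  classical
  rw [coefv, coeff_sum]
  by_cases hμ : μ i = 0
  · simp only [hμ, if_true]
    have key : ∀ m ∈ F.support.filter (fun m => m i = d),
        (coeff μ (monomial (Finsupp.erase i m) (F.coeff m)))
          = if m = μ + Finsupp.single i d then F.coeff m else 0 := by
      intro m hm
      rw [Finset.mem_filter] at hm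
      rw [coeff_monomial]
      congr 1
      apply propext
      have he : Finsupp.erase i (μ + Finsupp.single i d) = μ := by
        ext j
        by_cases hj : j = i
        · subst hj; simp [Finsupp.erase_apply, hμ]
        · simp [Finsupp.erase_apply, hj, Finsupp.single_apply, Ne.symm hj]
      constructor
      · intro h
        have h2 : m = Finsupp.erase i m + Finsupp.single i (m i) := (Finsupp.erase_add_single i m).symm
        rw [h2, h, hm.2]
      · intro h; rw [h, he]
    rw [Finset.sum_congr rfl key, Finset.sum_ite_eq' _ _ (fun m => F.coeff m)]
    by_cases hc : F.coeff (μ + Finsupp.single i d) = 0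
    · simp [hc]
    · have : (μ + Finsupp.single i d) ∈ F.support.filter (fun m => m i = d) := by
        rw [Finset.mem_filter, mem_support_iff]
        exact ⟨hc, by simp [hμ]⟩
      simp [this]
  · simp only [hμ, if_false]
    refine Finset.sum_eq_zero fun m hm => ?_
    rw [coeff_monomial, if_neg]
    intro h
    apply hμ; rw [← h]; simp [Finsupp.erase_apply]
end Aux
section Aux2
variable {n : ℕ} {K : Type*} [Field K]

theorem coefv_zero (i : Fin n) (d : ℕ) : coefv i d (0 : MvPolynomial (Fin n) K) = 0 := by
  simp [coefv]

theorem coefv_add (i : Fin n) (d : ℕ) (A B : MvPolynomial (Fin n) K) :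
    coefv i d (A + B) = coefv i d A + coefv i d B := by
  ext μ; simp only [coeff_coefv, coeff_add]; split <;> simp

theorem coefv_sub (i : Fin n) (d : ℕ) (A B : MvPolynomial (Fin n) K) :
    coefv i d (A - B) = coefv i d A - coefv i d B := by
  ext μ; simp only [coeff_coefv, coeff_sub]; split <;> simp

theorem mem_support_le_degreeOf {F : MvPolynomial (Fin n) K} {m : Fin n →₀ ℕ}
    (hm : m ∈ F.support) (j : Fin n) : m j ≤ F.degreeOf j :=
  degreeOf_le_iff.mp le_rfl m hm

theorem degreeOf_coefv_self (i : Fin n) (d : ℕ) (F : MvPolynomial (Fin n) K) :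
    degreeOf i (coefv i d F) = 0 := by
  refine Nat.le_zero.mp (degreeOf_le_iff.mpr fun m hm => ?_)
  rw [mem_support_iff, coeff_coefv] at hm
  by_contra h
  exact hm (by rw [if_neg (by omega)])

theorem degreeOf_coefv_ne {i i' : Fin n} (h : i' ≠ i) (d : ℕ) (F : MvPolynomial (Fin n) K) :
    degreeOf i' (coefv i d F) ≤ degreeOf i' F := by
  refine degreeOf_le_iff.mpr fun m hm => ?_
  rw [mem_support_iff, coeff_coefv] at hm
  by_cases h0 : m i = 0
  · rw [if_pos h0] at hm
    have := mem_support_le_degreeOf (mem_support_iff.mpr hm) i'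
    simpa [Finsupp.single_apply, Ne.symm h] using this
  · exact absurd (if_neg h0) (fun he => hm he)

theorem degreeOf_lcv_self (i : Fin n) (F : MvPolynomial (Fin n) K) :
    degreeOf i (lcv i F) = 0 := degreeOf_coefv_self _ _ _

theorem degreeOf_lt_of_coefv_eq_zero (i : Fin n) {d : ℕ} {Z : MvPolynomial (Fin n) K}
    (hd : 0 < d) (hle : degreeOf i Z ≤ d) (h0 : coefv i d Z = 0) : degreeOf i Z < d := by
  rw [degreeOf_lt_iff hd]
  intro m hm
  have h1 : m i ≤ d := le_trans (mem_support_le_degreeOf hm i) hle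
  rcases lt_or_eq_of_le h1 with h | h
  · exact h
  · exfalso
    have hc := coeff_coefv i d Z (Finsupp.erase i m)
    rw [h0] at hc
    simp only [coeff_zero] at hc
    have he0 : Finsupp.erase i m i = 0 := by simp [Finsupp.erase_apply]
    rw [if_pos he0] at hc
    rw [← h] at hc
    rw [Finsupp.erase_add_single] at hc
    exact mem_support_iff.mp hm hc.symm

theorem coefv_monomial_mul (i : Fin n) (d : ℕ) {m : Fin n →₀ ℕ} (hmi : m i = 0)
    (c : K) (B : MvPolynomial (Fin n) K) :
    coefv i d (monomial m c * B) = monomial m c * coefv i d B := by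
  classical
  ext μ
  rw [coeff_coefv, coeff_monomial_mul', coeff_monomial_mul', coeff_coefv]
  by_cases hμ : μ i = 0
  · rw [if_pos hμ]
    have hle : m ≤ μ + Finsupp.single i d ↔ m ≤ μ := by
      constructor <;> intro hh <;> rw [Finsupp.le_def] at hh ⊢ <;> intro j
      · rcases eq_or_ne j i with rfl | hj
        · simp [hmi]
        · have := hh j; simpa [Finsupp.single_apply, Ne.symm hj] using this
      · rcases eq_or_ne j i with rfl | hj
        · simp [hmi]
        · have := hh j; simp [Finsupp.single_apply, Ne.symm hj]; omega
    by_cases hm : m ≤ μ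
    · rw [if_pos (hle.mpr hm), if_pos hm]
      have h2 : (μ - m) i = 0 := by
        rw [Finsupp.tsub_apply]; omega
      rw [if_pos h2]
      have h3 : (μ + Finsupp.single i d) - m = μ - m + Finsupp.single i d := by
        ext j
        rcases eq_or_ne j i with rfl | hj
        · simp [Finsupp.tsub_apply, hmi]
        · simp [Finsupp.tsub_apply, Finsupp.single_apply, Ne.symm hj]
      rw [h3]
    · rw [if_neg (fun hh => hm (hle.mp hh)), if_neg hm]
  · rw [if_neg hμ]
    by_cases hm : m ≤ μ
    · rw [if_pos hm]
      have h2 : (μ - m) i ≠ 0 := by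
        rw [Finsupp.tsub_apply]; omega
      rw [if_neg h2, mul_zero]
    · rw [if_neg hm]

theorem coefv_sum (i : Fin n) (d : ℕ) {α : Type*} (s : Finset α)
    (f : α → MvPolynomial (Fin n) K) :
    coefv i d (∑ a ∈ s, f a) = ∑ a ∈ s, coefv i d (f a) := by
  classical
  induction s using Finset.induction with
  | empty => simp [coefv_zero]
  | insert _ _ h ih => rename_i a s
                       rw [Finset.sum_insert h, Finset.sum_insert h, coefv_add, ih]

theorem coefv_mul_left (i : Fin n) (d : ℕ) {A : MvPolynomial (Fin n) K}
    (hA : degreeOf i A = 0) (B : MvPolynomial (Fin n) K) :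
    coefv i d (A * B) = A * coefv i d B := by
  conv_lhs => rw [A.as_sum]
  conv_rhs => rw [A.as_sum]
  rw [Finset.sum_mul, coefv_sum, Finset.sum_mul]
  refine Finset.sum_congr rfl fun m hm => ?_
  have hmi : m i = 0 := Nat.le_zero.mp (hA ▸ mem_support_le_degreeOf hm i)
  exact coefv_monomial_mul i d hmi _ B

theorem coefv_X_pow_mul (i : Fin n) {e d : ℕ} (he : e ≤ d) (B : MvPolynomial (Fin n) K) :
    coefv i d (X i ^ e * B) = coefv i (d - e) B := by
  classical
  ext μ
  rw [coeff_coefv, coeff_coefv, X_pow_eq_monomial, coeff_monomial_mul']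
  by_cases hμ : μ i = 0
  · rw [if_pos hμ, if_pos hμ]
    have hle : Finsupp.single i e ≤ μ + Finsupp.single i d := by
      rw [Finsupp.le_def]; intro j
      rcases eq_or_ne j i with rfl | hj
      · simp; omega
      · simp [Finsupp.single_apply, Ne.symm hj]
    rw [if_pos hle, one_mul]
    have h3 : (μ + Finsupp.single i d) - Finsupp.single i e = μ + Finsupp.single i (d - e) := by
      ext j
      rcases eq_or_ne j i with rfl | hj
      · simp [Finsupp.tsub_apply]; omega
      · simp [Finsupp.tsub_apply, Finsupp.single_apply, Ne.symm hj]
    rw [h3]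
  · rw [if_neg hμ, if_neg hμ]

end Aux2
section Aux3
variable {n : ℕ} {K : Type*} [Field K]

theorem degreeOf_pow_le (i : Fin n) (A : MvPolynomial (Fin n) K) (k : ℕ) :
    degreeOf i (A ^ k) ≤ k * degreeOf i A := by
  induction k with
  | zero => rw [pow_zero, ← C_1]; rw [degreeOf_C]; omega
  | succ k ih =>
      rw [pow_succ]
      calc degreeOf i (A ^ k * A) ≤ degreeOf i (A ^ k) + degreeOf i A := degreeOf_mul_le _ _ _
      _ ≤ k * degreeOf i A + degreeOf i A := by omega
      _ = (k + 1) * degreeOf i A := by ring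

theorem degreeOf_sub_le (i : Fin n) (A B : MvPolynomial (Fin n) K) :
    degreeOf i (A - B) ≤ max (degreeOf i A) (degreeOf i B) := by
  classical
  refine degreeOf_le_iff.mpr fun m hm => ?_
  rcases Finset.mem_union.mp (support_sub _ _ _ hm) with h | h
  · exact le_trans (mem_support_le_degreeOf h i) (le_max_left _ _)
  · exact le_trans (mem_support_le_degreeOf h i) (le_max_right _ _)

theorem pdivAux_spec (i : Fin n) (F : MvPolynomial (Fin n) K) :
    ∀ (q : ℕ) (QR : MvPolynomial (Fin n) K × MvPolynomial (Fin n) K),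
      lcv i F ^ q * (QR.1 * F + QR.2) =
        (pdivAux i F q QR).1 * F + (pdivAux i F q QR).2 := by
  intro q
  induction q with
  | zero => intro QR; simp [pdivAux]
  | succ q ih =>
      intro QR
      rw [pdivAux]
      by_cases h : (QR.2).degreeOf i < F.degreeOf i
      · simp only [if_pos h]
        ring
      · simp only [if_neg h]
        rw [← ih]
        ring

theorem pdivAux_deg_lt (i : Fin n) (F : MvPolynomial (Fin n) K) (h1 : 1 ≤ degreeOf i F) :
    ∀ (q : ℕ) (QR : MvPolynomial (Fin n) K × MvPolynomial (Fin n) K),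
      degreeOf i QR.2 < degreeOf i F + q →
        degreeOf i (pdivAux i F q QR).2 < degreeOf i F := by
  intro q
  induction q with
  | zero => intro QR h; simpa [pdivAux] using h
  | succ q ih =>
      intro QR h
      rw [pdivAux]
      by_cases hb : (QR.2).degreeOf i < F.degreeOf i
      · simp only [if_pos hb]
        calc degreeOf i (lcv i F ^ (q+1) * QR.2)
            ≤ degreeOf i (lcv i F ^ (q+1)) + degreeOf i QR.2 := degreeOf_mul_le _ _ _
          _ ≤ (q+1) * degreeOf i (lcv i F) + degreeOf i QR.2 := by
              have := degreeOf_pow_le i (lcv i F) (q+1); omega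
          _ < degreeOf i F := by rw [degreeOf_lcv_self]; omega
      · simp only [if_neg hb]
        apply ih
        -- cancellation step
        set d := degreeOf i QR.2 with hd
        set m := degreeOf i F with hm
        have hdm : m ≤ d := not_lt.mp hb
        have hXe : degreeOf i (X i ^ (d - m) : MvPolynomial (Fin n) K) ≤ d - m := by
          calc degreeOf i (X (R := K) i ^ (d - m)) ≤ (d - m) * degreeOf i (X (R := K) i) :=
                degreeOf_pow_le _ _ _
            _ ≤ d - m := by rw [degreeOf_X]; simp
        have hle : degreeOf i (lcv i F * QR.2 -
            coefv i d QR.2 * X i ^ (d - m) * F) ≤ d := by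
          refine le_trans (degreeOf_sub_le _ _ _) (max_le ?_ ?_)
          · calc degreeOf i (lcv i F * QR.2) ≤ degreeOf i (lcv i F) + d := degreeOf_mul_le _ _ _
              _ = d := by rw [degreeOf_lcv_self]; omega
          · calc degreeOf i (coefv i d QR.2 * X i ^ (d - m) * F)
                ≤ degreeOf i (coefv i d QR.2 * X i ^ (d - m)) + m := degreeOf_mul_le _ _ _
              _ ≤ degreeOf i (coefv i d QR.2) + degreeOf i (X (R := K) i ^ (d - m)) + m := by
                  have := degreeOf_mul_le i (coefv i d QR.2) (X i ^ (d - m)); omega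
              _ ≤ d := by rw [degreeOf_coefv_self]; omega
        have h0 : coefv i d (lcv i F * QR.2 -
            coefv i d QR.2 * X i ^ (d - m) * F) = 0 := by
          rw [coefv_sub, coefv_mul_left i d (degreeOf_lcv_self i F),
            mul_assoc, coefv_mul_left i d (degreeOf_coefv_self i d QR.2),
            coefv_X_pow_mul i (by omega : d - m ≤ d)]
          have hmm : d - (d - m) = m := by omega
          rw [hmm]
          rw [lcv]
          ring
        have hcancel : degreeOf i (lcv i F * QR.2 -
            coefv i d QR.2 * X i ^ (d - m) * F) < d :=
          degreeOf_lt_of_coefv_eq_zero i (by omega) hle h0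
        simp only []
        omega

theorem pdivAux_deg_le {i i' : Fin n} (hne : i' ≠ i) (F : MvPolynomial (Fin n) K)
    (hF : degreeOf i' F = 0) :
    ∀ (q : ℕ) (QR : MvPolynomial (Fin n) K × MvPolynomial (Fin n) K),
      degreeOf i' (pdivAux i F q QR).2 ≤ degreeOf i' QR.2 := by
  intro q
  induction q with
  | zero => intro QR; simp [pdivAux]
  | succ q ih =>
      intro QR
      rw [pdivAux]
      have hlcv : degreeOf i' (lcv i F) = 0 :=
        Nat.le_zero.mp (hF ▸ degreeOf_coefv_ne hne _ F)
      by_cases hb : (QR.2).degreeOf i < F.degreeOf i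
      · simp only [if_pos hb]
        calc degreeOf i' (lcv i F ^ (q+1) * QR.2)
            ≤ degreeOf i' (lcv i F ^ (q+1)) + degreeOf i' QR.2 := degreeOf_mul_le _ _ _
          _ ≤ (q+1) * degreeOf i' (lcv i F) + degreeOf i' QR.2 := by
              have := degreeOf_pow_le i' (lcv i F) (q+1); omega
          _ = degreeOf i' QR.2 := by rw [hlcv]; omega
      · simp only [if_neg hb]
        refine le_trans (ih _) ?_
        simp only []
        set d := degreeOf i QR.2
        set e := d - degreeOf i F
        have hXe : degreeOf i' (X i ^ e : MvPolynomial (Fin n) K) = 0 := by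
          have : degreeOf i' (X (R := K) i ^ e) ≤ e * degreeOf i' (X (R := K) i) :=
            degreeOf_pow_le _ _ _
          rw [degreeOf_X, if_neg hne] at this
          omega
        have hcv : degreeOf i' (coefv i d QR.2) ≤ degreeOf i' QR.2 :=
          degreeOf_coefv_ne hne _ _
        refine le_trans (degreeOf_sub_le _ _ _) (max_le ?_ ?_)
        · have := degreeOf_mul_le i' (lcv i F) QR.2; omega
        · have h1 := degreeOf_mul_le i' (coefv i d QR.2 * X i ^ e) F
          have h2 := degreeOf_mul_le i' (coefv i d QR.2) (X i ^ e)
          omega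

end Aux3
section Aux4
variable {n : ℕ} {K : Type*} [Field K]

theorem cls_eq_max (P : MvPolynomial (Fin n) K) (h : P.vars.Nonempty) :
    cls P = (P.vars.max' h : ℕ) + 1 := by
  rw [cls]
  refine le_antisymm (Finset.sup_le fun i hi => ?_)
    (Finset.le_sup (f := fun i : Fin n => (i : ℕ) + 1) (P.vars.max'_mem h))
  have := P.vars.le_max' i hi
  rw [Fin.le_def] at this
  omega

theorem coord_eq_zero_of_not_mem_vars {P : MvPolynomial (Fin n) K} {m : Fin n →₀ ℕ}
    (hm : m ∈ P.support) {k : Fin n} (hk : k ∉ P.vars) : m k = 0 := by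
  by_contra h
  exact hk ((mem_vars k).mpr ⟨m, hm, Finsupp.mem_support_iff.mpr h⟩)

theorem not_mem_vars_of_max_lt {P : MvPolynomial (Fin n) K} (h : P.vars.Nonempty) {k : Fin n}
    (hk : P.vars.max' h < k) : k ∉ P.vars :=
  fun hm => absurd (P.vars.le_max' k hm) (not_le.mpr hk)

theorem degreeOf_eq_zero_of_not_mem_vars {P : MvPolynomial (Fin n) K} {k : Fin n}
    (hk : k ∉ P.vars) : degreeOf k P = 0 :=
  Nat.le_zero.mp (degreeOf_le_iff.mpr fun m hm =>
    le_of_eq (coord_eq_zero_of_not_mem_vars hm hk))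

theorem one_le_degreeOf_of_mem_vars {P : MvPolynomial (Fin n) K} {k : Fin n}
    (hk : k ∈ P.vars) : 1 ≤ degreeOf k P := by
  obtain ⟨m, hm, hkm⟩ := (mem_vars k).mp hk
  have h1 : 1 ≤ m k := Nat.one_le_iff_ne_zero.mpr (Finsupp.mem_support_iff.mp hkm)
  exact le_trans h1 (mem_support_le_degreeOf hm k)

theorem eq_C_of_vars_empty {P : MvPolynomial (Fin n) K} (h : ¬ P.vars.Nonempty) :
    P = C (P.coeff 0) := by
  rw [Finset.not_nonempty_iff_eq_empty] at h
  ext m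
  rw [coeff_C]
  by_cases hm : m = 0
  · subst hm; simp
  · rw [if_neg (fun hh => hm hh.symm)]
    by_contra hc
    obtain ⟨j, hj⟩ := Finsupp.support_nonempty_iff.mpr hm
    have : j ∈ P.vars := (mem_vars j).mpr ⟨m, mem_support_iff.mpr hc, hj⟩
    rw [h] at this
    exact absurd this (Finset.notMem_empty j)

theorem vars_nonempty_of_mem_proper {I : Ideal (MvPolynomial (Fin n) K)} (hI : I ≠ ⊤)
    {g : MvPolynomial (Fin n) K} (hg : g ∈ I) (hg0 : g ≠ 0) : g.vars.Nonempty := by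
  by_contra hv
  set a := g.coeff 0 with ha
  have hgC : g = C a := eq_C_of_vars_empty hv
  have hc0 : a ≠ 0 := fun h => hg0 (by rw [hgC, h, C_0])
  apply hI
  rw [Ideal.eq_top_iff_one]
  have h1 : C (a⁻¹) * g ∈ I := I.mul_mem_left _ hg
  have h2 : C (a⁻¹) * g = 1 := by
    conv_lhs => rw [hgC]
    rw [← C_mul, inv_mul_cancel₀ hc0, C_1]
  rwa [h2] at h1

theorem premLv_spec (G T : MvPolynomial (Fin n) K) (hT : T.vars.Nonempty) :
    ∃ (q : ℕ) (Q : MvPolynomial (Fin n) K), ini T ^ q * G = Q * T + premLv G T := by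
  set j := T.vars.max' hT with hj
  refine ⟨G.degreeOf j + 1 - T.degreeOf j, (pdivAux j T (G.degreeOf j + 1 - T.degreeOf j) (0, G)).1, ?_⟩
  have hspec := pdivAux_spec j T (G.degreeOf j + 1 - T.degreeOf j) (0, G)
  simp only [zero_mul, zero_add] at hspec
  rw [premLv, dif_pos hT, prem, ini, dif_pos hT, lcv]
  exact hspec

theorem premLv_deg_lt (G T : MvPolynomial (Fin n) K) (hT : T.vars.Nonempty) :
    degreeOf (T.vars.max' hT) (premLv G T) < degreeOf (T.vars.max' hT) T := by
  have h1 : 1 ≤ degreeOf (T.vars.max' hT) T :=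
    one_le_degreeOf_of_mem_vars (T.vars.max'_mem hT)
  rw [premLv, dif_pos hT, prem]
  exact pdivAux_deg_lt _ T h1 _ (0, G) (by simp only []; omega)

theorem premLv_deg_le {i' : Fin n} (G T : MvPolynomial (Fin n) K)
    (hi' : degreeOf i' T = 0) : degreeOf i' (premLv G T) ≤ degreeOf i' G := by
  by_cases hT : T.vars.Nonempty
  · have hne : i' ≠ T.vars.max' hT := by
      intro h
      have h2 := one_le_degreeOf_of_mem_vars (T.vars.max'_mem hT)
      rw [h] at hi'
      omega
    rw [premLv, dif_pos hT, prem]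
    exact pdivAux_deg_le hne T hi' _ (0, G)
  · rw [premLv, dif_neg hT, degreeOf_zero]
    omega

end Aux4
section Aux5
variable {n : ℕ} {K : Type*} [Field K]

theorem premTS_nil (F : MvPolynomial (Fin n) K) : premTS F [] = F := rfl

theorem premTS_cons (F T : MvPolynomial (Fin n) K) (L : List (MvPolynomial (Fin n) K)) :
    premTS F (T :: L) = premLv (premTS F L) T := rfl

theorem span_mono_cons (T : MvPolynomial (Fin n) K) (L : List (MvPolynomial (Fin n) K)) :
    Ideal.span {T' | T' ∈ L} ≤ Ideal.span {T' | T' ∈ T :: L} :=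
  Ideal.span_mono (fun x hx => List.mem_cons_of_mem T hx)

theorem premTS_spec (L : List (MvPolynomial (Fin n) K)) (F : MvPolynomial (Fin n) K) :
    ∃ (M E : MvPolynomial (Fin n) K) (N : ℕ),
      M * F - premTS F L ∈ Ideal.span {T | T ∈ L} ∧
        M * E = ((L.map ini).prod) ^ N := by
  induction L with
  | nil =>
      exact ⟨1, 1, 0, by simp [premTS_nil], by simp⟩
  | cons T L ih =>
      obtain ⟨M', E', N', hmem', hME'⟩ := ih
      rw [premTS_cons]
      by_cases hT : T.vars.Nonempty
      · obtain ⟨q, Q, hQ⟩ := premLv_spec (premTS F L) T hT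
        refine ⟨ini T ^ q * M', ini T ^ N' * (L.map ini).prod ^ q * E', q + N', ?_, ?_⟩
        · have heq : ini T ^ q * M' * F - premLv (premTS F L) T =
              ini T ^ q * (M' * F - premTS F L) + Q * T := by
            linear_combination hQ
          rw [heq]
          refine Ideal.add_mem _ (Ideal.mul_mem_left _ _ (span_mono_cons T L hmem')) ?_
          exact Ideal.mul_mem_left _ _ (Ideal.subset_span (List.mem_cons_self (a := T) (l := L)))
        · have h1 : ini T ^ q * M' * (ini T ^ N' * (L.map ini).prod ^ q * E') =
              ini T ^ (q + N') * (L.map ini).prod ^ q * (M' * E') := by ring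
          rw [h1, hME', List.map_cons, List.prod_cons, mul_pow, mul_assoc, ← pow_add]
      · rw [premLv, dif_neg hT]
        by_cases hT0 : T = 0
        · refine ⟨0, 0, 1, ?_, ?_⟩
          · simpa using Ideal.zero_mem _
          · rw [List.map_cons, List.prod_cons, ini, dif_neg hT, hT0]
            ring
        · -- T is a nonzero constant, the span is the whole ring
          set a := T.coeff 0 with ha
          have hgC : T = C a := eq_C_of_vars_empty hT
          have hc0 : a ≠ 0 := fun h => hT0 (by rw [hgC, h, C_0])
          refine ⟨1, 1, 0, ?_, by simp⟩
          have hTmem : T ∈ Ideal.span {T' | T' ∈ T :: L} :=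
            Ideal.subset_span (List.mem_cons_self (a := T) (l := L))
          have h1 : (1 : MvPolynomial (Fin n) K) ∈ Ideal.span {T' | T' ∈ T :: L} := by
            have h3 := Ideal.mul_mem_left _ (C (a⁻¹)) hTmem
            have h2 : C (a⁻¹) * T = 1 := by
              conv_lhs => rw [hgC]
              rw [← C_mul, inv_mul_cancel₀ hc0, C_1]
            rwa [h2] at h3
          have h4 := Ideal.mul_mem_left _ F h1
          simpa using h4

theorem premTS_reduced (L : List (MvPolynomial (Fin n) K)) (F : MvPolynomial (Fin n) K)
    (hv : ∀ T ∈ L, T.vars.Nonempty) (hpw : L.Pairwise fun A B => cls A < cls B) :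
    ∀ c ∈ L, ∀ (h : c.vars.Nonempty),
      degreeOf (c.vars.max' h) (premTS F L) < degreeOf (c.vars.max' h) c := by
  induction L with
  | nil => intro c hc; exact absurd hc List.not_mem_nil
  | cons T L ih =>
      intro c hc h
      rw [premTS_cons]
      rcases List.mem_cons.mp hc with rfl | hcL
      · exact premLv_deg_lt _ _ h
      · have hclsTc : cls T < cls c := (List.pairwise_cons.mp hpw).1 c hcL
        have hT0 : degreeOf (c.vars.max' h) T = 0 := by
          apply degreeOf_eq_zero_of_not_mem_vars
          intro hmem
          by_cases hTv : T.vars.Nonempty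
          · have h1 := T.vars.le_max' _ hmem
            have h2 := cls_eq_max T hTv
            have h3 := cls_eq_max c h
            rw [Fin.le_def] at h1
            omega
          · exact hTv ⟨_, hmem⟩
        refine lt_of_le_of_lt (premLv_deg_le _ _ hT0) ?_
        exact ih (fun T' hT' => hv T' (List.mem_cons_of_mem T hT'))
          (List.pairwise_cons.mp hpw).2 c hcL h

theorem plexLT_asymm {a b : Fin n →₀ ℕ} (h1 : plexLT a b) (h2 : plexLT b a) : False := by
  obtain ⟨k1, hk1, hg1⟩ := h1
  obtain ⟨k2, hk2, hg2⟩ := h2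
  rcases lt_trichotomy k1 k2 with h | h | h
  · have := hg1 k2 h; omega
  · subst h; omega
  · have := hg2 k1 h; omega

theorem IsLpp_unique {P : MvPolynomial (Fin n) K} {m1 m2 : Fin n →₀ ℕ}
    (h1 : IsLpp P m1) (h2 : IsLpp P m2) : m1 = m2 := by
  by_contra hne
  exact plexLT_asymm (h1.2 m2 h2.1 (fun h => hne h.symm)) (h2.2 m1 h1.1 hne)

theorem lpp_coord_ge {c : MvPolynomial (Fin n) K} {mc : Fin n →₀ ℕ}
    (hlpp : IsLpp c mc) (h : c.vars.Nonempty) :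
    degreeOf (c.vars.max' h) c ≤ mc (c.vars.max' h) := by
  refine degreeOf_le_iff.mpr fun m' hm' => ?_
  rcases eq_or_ne m' mc with rfl | hne
  · exact le_rfl
  · obtain ⟨k, hk, hg⟩ := hlpp.2 m' hm' hne
    rcases lt_trichotomy k (c.vars.max' h) with hlt | heq | hgt
    · rw [hg _ hlt]
    · subst heq; omega
    · have : mc k = 0 :=
        coord_eq_zero_of_not_mem_vars hlpp.1 (not_mem_vars_of_max_lt h hgt)
      omega

theorem lpp_coord_le {g : MvPolynomial (Fin n) K} {mc mg : Fin n →₀ ℕ}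
    (hmg : mg ∈ g.support) (hg : g.vars.Nonempty)
    (hor : mc = mg ∨ plexLT mc mg) :
    mc (g.vars.max' hg) ≤ mg (g.vars.max' hg) := by
  rcases hor with rfl | ⟨k, hk, hgr⟩
  · exact le_rfl
  · rcases lt_trichotomy k (g.vars.max' hg) with hlt | heq | hgt
    · rw [hgr _ hlt]
    · subst heq; omega
    · have : mg k = 0 :=
        coord_eq_zero_of_not_mem_vars hmg (not_mem_vars_of_max_lt hg hgt)
      omega

end Aux5
/-- Proposition charpro (b). Let `C = [C_1, …, C_r]` be the
W-characteristic set of `⟨P⟩`. Then `⟨C_1, …, C_r⟩ ⊆ ⟨P⟩ ⊆ sat(C)`. -/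
theorem statement7 {n : ℕ} {K : Type*} [Field K]
    (P : Finset (MvPolynomial (Fin n) K)) (hne : P.Nonempty) (h0 : ∀ p ∈ P, p ≠ 0)
    (hproper : Ideal.span (P : Set (MvPolynomial (Fin n) K)) ≠ ⊤)
    (Cs : List (MvPolynomial (Fin n) K))
    (hW : IsWCharSet (Ideal.span (P : Set (MvPolynomial (Fin n) K))) Cs) :
    Ideal.span {c | c ∈ Cs} ≤ Ideal.span (P : Set (MvPolynomial (Fin n) K)) ∧
      ∀ F ∈ Ideal.span (P : Set (MvPolynomial (Fin n) K)), F ∈ satTS Cs := by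
  classical
  obtain ⟨G, hGB, hchain, hCG, hGclass, hmin⟩ := hW
  have hCsI : ∀ c ∈ Cs, c ∈ Ideal.span (P : Set (MvPolynomial (Fin n) K)) :=
    fun c hc => (hGB.1 c (hCG c hc)).1
  have part1 : Ideal.span {c | c ∈ Cs} ≤ Ideal.span (P : Set (MvPolynomial (Fin n) K)) :=
    Ideal.span_le.mpr fun c hc => hCsI c hc
  refine ⟨part1, ?_⟩
  intro F hF
  have hvars : ∀ c ∈ Cs, c.vars.Nonempty := fun c hc =>
    vars_nonempty_of_mem_proper hproper (hCsI c hc) ((hGB.1 c (hCG c hc)).2.1)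
  have hpw : Cs.Pairwise fun A B => cls A < cls B := by
    have : IsTrans (MvPolynomial (Fin n) K) (fun A B => cls A < cls B) :=
      ⟨fun a b c hab hbc => lt_trans hab hbc⟩
    exact List.isChain_iff_pairwise.mp hchain
  obtain ⟨M, E, N, hmem, hME⟩ := premTS_spec Cs F
  have hRI : premTS F Cs ∈ Ideal.span (P : Set (MvPolynomial (Fin n) K)) := by
    have h1 : M * F ∈ Ideal.span (P : Set (MvPolynomial (Fin n) K)) :=
      Ideal.mul_mem_left _ _ hF
    have h2 := part1 hmem
    have h3 : premTS F Cs = M * F - (M * F - premTS F Cs) := by ring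
    rw [h3]
    exact Ideal.sub_mem _ h1 h2
  have hR0 : premTS F Cs = 0 := by
    by_contra hR0
    obtain ⟨g, hgG, mg, mR, hlppg, hlppR, hdiv⟩ := hGB.2.1 (premTS F Cs) hRI hR0
    have hgI := (hGB.1 g hgG).1
    have hgne := (hGB.1 g hgG).2.1
    have hgvars : g.vars.Nonempty := vars_nonempty_of_mem_proper hproper hgI hgne
    obtain ⟨c, hcCs, hclseq⟩ := hGclass g hgG
    have hcvars := hvars c hcCs
    have hp : c.vars.max' hcvars = g.vars.max' hgvars := by
      have h1 := cls_eq_max c hcvars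
      have h2 := cls_eq_max g hgvars
      rw [hclseq, h2] at h1
      exact Fin.ext (by omega)
    have hmc : ∃ mc, IsLpp c mc ∧ (mc = mg ∨ plexLT mc mg) := by
      rcases eq_or_ne g c with rfl | hgc
      · exact ⟨mg, hlppg, Or.inl rfl⟩
      · obtain ⟨mc, mg', h1, h2, h3⟩ := hmin c hcCs g hgG hclseq.symm hgc
        have h4 : mg' = mg := IsLpp_unique h2 hlppg
        exact ⟨mc, h1, Or.inr (h4 ▸ h3)⟩
    obtain ⟨mc, hlppc, hor⟩ := hmc
    have h1 : degreeOf (c.vars.max' hcvars) c ≤ mc (c.vars.max' hcvars) :=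
      lpp_coord_ge hlppc hcvars
    have h2 : mc (g.vars.max' hgvars) ≤ mg (g.vars.max' hgvars) :=
      lpp_coord_le hlppg.1 hgvars hor
    have h3 : mg (g.vars.max' hgvars) ≤ mR (g.vars.max' hgvars) :=
      Finsupp.le_def.mp hdiv _
    have h4 : mR (g.vars.max' hgvars) ≤ degreeOf (g.vars.max' hgvars) (premTS F Cs) :=
      mem_support_le_degreeOf hlppR.1 _
    have h5 : degreeOf (c.vars.max' hcvars) (premTS F Cs) < degreeOf (c.vars.max' hcvars) c :=
      premTS_reduced Cs F hvars hpw c hcCs hcvars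
    rw [hp] at h1 h5
    omega
  refine ⟨N + 1, Nat.succ_pos _, ?_⟩
  have hMF : M * F ∈ Ideal.span {T | T ∈ Cs} := by
    have := hmem
    rw [hR0, sub_zero] at this
    exact this
  have hkey : (Cs.map ini).prod ^ (N + 1) * F = ((Cs.map ini).prod * E) * (M * F) := by
    rw [pow_succ, ← hME]
    ring
  rw [hkey]
  exact Ideal.mul_mem_left _ _ hMF

end CharSets
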